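/- arXiv:1607.06962 — 2 statements merged into one kernel-verified Lean document; each statement's English description precedes it below -/
import Mathlib

section
/- Let q ≥ 2 be a prime power and n ≥ 3. For all integers i, j, m, k with 1 ≤ i ≤ n−1, 1 ≤ j ≤ n−1, 1 ≤ m ≤ n−1 and 2 ≤ k ≤ n−1, the congruence q^i + q^{j+1} + q^{m+k} ≡ q^k + q + 1 (mod q^n − 1) holds if and only if either (i = 1, j = k−1 and m = n−k) or (i = k, j = n−1 and m = n−k+1). -/
private lemma aux_pow_congr {q : ℕ} (hq : 1 ≤ q) (n e : ℕ) :
    q ^ e ≡ q ^ (e % n) [MOD q ^ n - 1] := by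
  have h1 : (1 : ℕ) ≡ q ^ n [MOD q ^ n - 1] :=
    (Nat.modEq_iff_dvd' (Nat.one_le_pow n q hq)).mpr dvd_rfl
  calc q ^ e = (q ^ n) ^ (e / n) * q ^ (e % n) := by
        rw [← pow_mul, ← pow_add, Nat.div_add_mod]
    _ ≡ 1 ^ (e / n) * q ^ (e % n) [MOD q ^ n - 1] :=
        Nat.ModEq.mul_right _ (h1.symm.pow _)
    _ = q ^ (e % n) := by rw [one_pow, one_mul]

private lemma aux_key2 {q a B k : ℕ} (hq : 2 ≤ q) (ha : 1 ≤ a) (hB : 1 ≤ B) (hk : 2 ≤ k)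
    (h : q ^ a + q ^ B = q ^ k + q) : (a = 1 ∧ B = k) ∨ (a = k ∧ B = 1) := by
  have hq0 : 0 < q := by omega
  have ea : q ^ (a - 1) * q = q ^ a := by rw [← pow_succ]; congr 1; omega
  have eB : q ^ (B - 1) * q = q ^ B := by rw [← pow_succ]; congr 1; omega
  have ek : q ^ (k - 1) * q = q ^ k := by rw [← pow_succ]; congr 1; omega
  have h2 : q ^ (a - 1) + q ^ (B - 1) = q ^ (k - 1) + 1 := by
    have hmul : (q ^ (a - 1) + q ^ (B - 1)) * q = (q ^ (k - 1) + 1) * q := by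
      rw [add_mul, add_mul, ea, eB, ek, one_mul]; exact h
    exact Nat.eq_of_mul_eq_mul_right hq0 hmul
  rcases Nat.eq_zero_or_pos (a - 1) with ha0 | ha1 <;>
    rcases Nat.eq_zero_or_pos (B - 1) with hB0 | hB1
  · simp only [ha0, hB0, pow_zero] at h2
    have : q ≤ q ^ (k - 1) := by
      calc q = q ^ 1 := (pow_one q).symm
        _ ≤ q ^ (k - 1) := Nat.pow_le_pow_right (by omega) (by omega)
    omega
  · rw [ha0, pow_zero] at h2
    have : q ^ (B - 1) = q ^ (k - 1) := by omega
    have := Nat.pow_right_injective hq this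
    left; omega
  · rw [hB0, pow_zero] at h2
    have : q ^ (a - 1) = q ^ (k - 1) := by omega
    have := Nat.pow_right_injective hq this
    right; omega
  · exfalso
    have d1 : q ∣ q ^ (a - 1) + q ^ (B - 1) :=
      dvd_add (dvd_pow_self q (by omega)) (dvd_pow_self q (by omega))
    rw [h2] at d1
    have d2 : q ∣ q ^ (k - 1) := dvd_pow_self q (by omega)
    have : q ∣ 1 := (Nat.dvd_add_right d2).mp d1
    have := Nat.le_of_dvd one_pos this
    omega

private lemma aux_key {q a b c k : ℕ} (hq : 2 ≤ q) (ha : 1 ≤ a) (hk : 2 ≤ k)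
    (h : q ^ a + q ^ b + q ^ c = q ^ k + q + 1) :
    (a = 1 ∧ b = k ∧ c = 0) ∨ (a = 1 ∧ b = 0 ∧ c = k) ∨
    (a = k ∧ b = 1 ∧ c = 0) ∨ (a = k ∧ b = 0 ∧ c = 1) := by
  rcases Nat.eq_zero_or_pos b with hb | hb <;> rcases Nat.eq_zero_or_pos c with hc | hc
  · exfalso
    rw [hb, hc, pow_zero] at h
    have h' : q ^ a + 1 = q ^ k + q := by omega
    have d1 : q ∣ q ^ k + q := dvd_add (dvd_pow_self q (by omega)) dvd_rfl
    rw [← h'] at d1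
    have d2 : q ∣ q ^ a := dvd_pow_self q (by omega)
    have : q ∣ 1 := (Nat.dvd_add_right d2).mp d1
    have := Nat.le_of_dvd one_pos this
    omega
  · rw [hb, pow_zero] at h
    have h' : q ^ a + q ^ c = q ^ k + q := by omega
    rcases aux_key2 hq ha hc hk h' with ⟨h1, h2⟩ | ⟨h1, h2⟩
    · right; left; exact ⟨h1, hb, h2⟩
    · right; right; right; exact ⟨h1, hb, h2⟩
  · rw [hc, pow_zero] at h
    have h' : q ^ a + q ^ b = q ^ k + q := by omega
    rcases aux_key2 hq ha hb hk h' with ⟨h1, h2⟩ | ⟨h1, h2⟩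
    · left; exact ⟨h1, h2, hc⟩
    · right; right; left; exact ⟨h1, h2, hc⟩
  · exfalso
    have d1 : q ∣ q ^ a + q ^ b + q ^ c :=
      dvd_add (dvd_add (dvd_pow_self q (by omega)) (dvd_pow_self q (by omega)))
        (dvd_pow_self q (by omega))
    rw [h] at d1
    have d2 : q ∣ q ^ k + q := dvd_add (dvd_pow_self q (by omega)) dvd_rfl
    have : q ∣ 1 := by
      have := (Nat.dvd_add_right d2).mp (by rwa [add_assoc] at d1)
      exact this
    have := Nat.le_of_dvd one_pos this
    omega

private lemma aux_two_pow_ne {t k : ℕ} (hk : 2 ≤ k) : 2 ^ t ≠ 2 ^ k + 2 := by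
  intro h
  match t with
  | 0 =>
    have : 1 ≤ 2 ^ k := Nat.one_le_two_pow
    simp only [pow_zero] at h; omega
  | 1 =>
    have : 1 ≤ 2 ^ k := Nat.one_le_two_pow
    simp only [pow_one] at h; omega
  | (t + 2) =>
    obtain ⟨k', rfl⟩ : ∃ k', k = k' + 2 := ⟨k - 2, by omega⟩
    have e1 : 2 ^ (t + 2) = 4 * 2 ^ t := by ring
    have e2 : 2 ^ (k' + 2) = 4 * 2 ^ k' := by ring
    omega

private lemma aux_key3 {n k i b c : ℕ} (hn : 3 ≤ n) (hk : 2 ≤ k) (hkn : k ≤ n - 1)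
    (hi : i ≤ n - 1) (hb : b ≤ n - 1) (hc : c ≤ n - 1)
    (h : 2 ^ i + 2 ^ b + 2 ^ c = 2 ^ n + 2 ^ k + 2) : False := by
  have e1 : 2 ^ (n - 1) * 2 = 2 ^ n := by rw [← pow_succ]; congr 1; omega
  have e2 : 2 ^ (n - 2) * 2 = 2 ^ (n - 1) := by rw [← pow_succ]; congr 1; omega
  have hk4 : 4 ≤ 2 ^ k := by
    calc (4 : ℕ) = 2 ^ 2 := rfl
      _ ≤ 2 ^ k := Nat.pow_le_pow_right (by norm_num) hk
  by_cases hie : i = n - 1 <;> by_cases hbe : b = n - 1 <;> by_cases hce : c = n - 1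
  · rw [hie, hbe, hce] at h
    exact aux_two_pow_ne hk (by omega : 2 ^ (n - 1) = 2 ^ k + 2)
  · rw [hie, hbe] at h
    exact aux_two_pow_ne hk (by omega : 2 ^ c = 2 ^ k + 2)
  · rw [hie, hce] at h
    exact aux_two_pow_ne hk (by omega : 2 ^ b = 2 ^ k + 2)
  · have b1 : 2 ^ b ≤ 2 ^ (n - 2) := Nat.pow_le_pow_right (by norm_num) (by omega)
    have c1 : 2 ^ c ≤ 2 ^ (n - 2) := Nat.pow_le_pow_right (by norm_num) (by omega)
    rw [hie] at h
    omega
  · rw [hbe, hce] at h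
    exact aux_two_pow_ne hk (by omega : 2 ^ i = 2 ^ k + 2)
  · have i1 : 2 ^ i ≤ 2 ^ (n - 2) := Nat.pow_le_pow_right (by norm_num) (by omega)
    have c1 : 2 ^ c ≤ 2 ^ (n - 2) := Nat.pow_le_pow_right (by norm_num) (by omega)
    rw [hbe] at h
    omega
  · have i1 : 2 ^ i ≤ 2 ^ (n - 2) := Nat.pow_le_pow_right (by norm_num) (by omega)
    have b1 : 2 ^ b ≤ 2 ^ (n - 2) := Nat.pow_le_pow_right (by norm_num) (by omega)
    rw [hce] at h
    omega
  · have i1 : 2 ^ i ≤ 2 ^ (n - 2) := Nat.pow_le_pow_right (by norm_num) (by omega)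
    have b1 : 2 ^ b ≤ 2 ^ (n - 2) := Nat.pow_le_pow_right (by norm_num) (by omega)
    have c1 : 2 ^ c ≤ 2 ^ (n - 2) := Nat.pow_le_pow_right (by norm_num) (by omega)
    omega

/-- for a prime power `q ≥ 2`, `n ≥ 3`, `1 ≤ i, j, m ≤ n-1` and
`2 ≤ k ≤ n-1`, one has `q^i + q^{j+1} + q^{m+k} ≡ q^k + q + 1 (mod q^n - 1)` if and only
if `(i = 1, j = k-1, m = n-k)` or `(i = k, j = n-1, m = n-k+1)`. -/
theorem stmt_18 (q : ℕ) (hq2 : 2 ≤ q) (hqpp : ∃ p s : ℕ, p.Prime ∧ 0 < s ∧ q = p ^ s)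
    (n : ℕ) (hn : 3 ≤ n) (i j m k : ℕ)
    (hi1 : 1 ≤ i) (hi2 : i ≤ n - 1) (hj1 : 1 ≤ j) (hj2 : j ≤ n - 1)
    (hm1 : 1 ≤ m) (hm2 : m ≤ n - 1) (hk1 : 2 ≤ k) (hk2 : k ≤ n - 1) :
    q ^ i + q ^ (j + 1) + q ^ (m + k) ≡ q ^ k + q + 1 [MOD q ^ n - 1] ↔
      ((i = 1 ∧ j = k - 1 ∧ m = n - k) ∨ (i = k ∧ j = n - 1 ∧ m = n - k + 1)) := by
  have hq1 : 1 ≤ q := by omega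
  have hqn1 : 1 ≤ q ^ n := Nat.one_le_pow _ _ (by omega)
  constructor
  · intro h
    set b := (j + 1) % n with hbdef
    set c := (m + k) % n with hcdef
    have hbn : b < n := Nat.mod_lt _ (by omega)
    have hcn : c < n := Nat.mod_lt _ (by omega)
    have hbcase : (b = j + 1 ∧ j + 1 < n) ∨ (b = 0 ∧ j = n - 1) := by
      rcases lt_or_ge (j + 1) n with hlt | hge
      · exact Or.inl ⟨Nat.mod_eq_of_lt hlt, hlt⟩
      · have hjn : j + 1 = n := by omega
        exact Or.inr ⟨by rw [hbdef, hjn, Nat.mod_self], by omega⟩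
    have hccase : (c = m + k ∧ m + k < n) ∨ (c = m + k - n ∧ n ≤ m + k) := by
      rcases lt_or_ge (m + k) n with hlt | hge
      · exact Or.inl ⟨Nat.mod_eq_of_lt hlt, hlt⟩
      · refine Or.inr ⟨?_, hge⟩
        rw [hcdef, Nat.mod_eq_sub_mod hge, Nat.mod_eq_of_lt (by omega)]
    have h' : q ^ i + q ^ b + q ^ c ≡ q ^ k + q + 1 [MOD q ^ n - 1] := by
      have hb' := aux_pow_congr hq1 n (j + 1)
      have hc' := aux_pow_congr hq1 n (m + k)
      exact (((Nat.ModEq.refl (q ^ i)).add hb'.symm).add hc'.symm).trans h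
    -- nat bounds
    have hQ1 : 1 ≤ q ^ (n - 1) := Nat.one_le_pow _ _ (by omega)
    have hiQ : q ^ i ≤ q ^ (n - 1) := Nat.pow_le_pow_right hq1 hi2
    have hbQ : q ^ b ≤ q ^ (n - 1) := Nat.pow_le_pow_right hq1 (by omega)
    have hcQ : q ^ c ≤ q ^ (n - 1) := Nat.pow_le_pow_right hq1 (by omega)
    have hkQ : q ^ k ≤ q ^ (n - 1) := Nat.pow_le_pow_right hq1 hk2
    have hqQ : q ≤ q ^ (n - 1) := by
      calc q = q ^ 1 := (pow_one q).symm
        _ ≤ q ^ (n - 1) := Nat.pow_le_pow_right hq1 (by omega)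
    have hQq : q ^ (n - 1) * q = q ^ n := by rw [← pow_succ]; congr 1; omega
    have h2Q : q ^ (n - 1) * 2 ≤ q ^ (n - 1) * q := Nat.mul_le_mul_left _ hq2
    have hi1' : 1 ≤ q ^ i := Nat.one_le_pow _ _ (by omega)
    have hb1' : 1 ≤ q ^ b := Nat.one_le_pow _ _ (by omega)
    have hc1' : 1 ≤ q ^ c := Nat.one_le_pow _ _ (by omega)
    have hk1' : 1 ≤ q ^ k := Nat.one_le_pow _ _ (by omega)
    -- int versions
    have A1 : (q : ℤ) ^ i ≤ (q : ℤ) ^ (n - 1) := by exact_mod_cast hiQ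
    have A2 : (q : ℤ) ^ b ≤ (q : ℤ) ^ (n - 1) := by exact_mod_cast hbQ
    have A3 : (q : ℤ) ^ c ≤ (q : ℤ) ^ (n - 1) := by exact_mod_cast hcQ
    have A4 : (q : ℤ) ^ k ≤ (q : ℤ) ^ (n - 1) := by exact_mod_cast hkQ
    have A5 : (q : ℤ) ≤ (q : ℤ) ^ (n - 1) := by exact_mod_cast hqQ
    have A6 : (q : ℤ) ^ (n - 1) * q = (q : ℤ) ^ n := by exact_mod_cast hQq
    have A7 : (q : ℤ) ^ (n - 1) * 2 ≤ (q : ℤ) ^ (n - 1) * q := by exact_mod_cast h2Q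
    have A8 : 1 ≤ (q : ℤ) ^ i := by exact_mod_cast hi1'
    have A9 : 1 ≤ (q : ℤ) ^ b := by exact_mod_cast hb1'
    have A10 : 1 ≤ (q : ℤ) ^ c := by exact_mod_cast hc1'
    have A11 : 1 ≤ (q : ℤ) ^ k := by exact_mod_cast hk1'
    have A12 : 1 ≤ (q : ℤ) ^ (n - 1) := by exact_mod_cast hQ1
    have A13 : 2 ≤ (q : ℤ) := by exact_mod_cast hq2
    have hNint : ((q ^ n - 1 : ℕ) : ℤ) = (q : ℤ) ^ n - 1 := by
      push_cast [hqn1]; ring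
    obtain ⟨t, ht⟩ := h'.dvd
    push_cast at ht
    rw [hNint] at ht
    -- ht : (q:ℤ)^k + q + 1 - (q^i + q^b + q^c) = ((q:ℤ)^n - 1) * t
    have hNpos : (0 : ℤ) < (q : ℤ) ^ n - 1 := by omega
    have hub : (q : ℤ) ^ k + q + 1 - ((q : ℤ) ^ i + (q : ℤ) ^ b + (q : ℤ) ^ c)
        < (q : ℤ) ^ n - 1 := by omega
    have hlb : ((q : ℤ) ^ n - 1) * (-2)
        < (q : ℤ) ^ k + q + 1 - ((q : ℤ) ^ i + (q : ℤ) ^ b + (q : ℤ) ^ c) := by omega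
    have l1 : t < 1 := by
      have : ((q : ℤ) ^ n - 1) * t < ((q : ℤ) ^ n - 1) * 1 := by
        rw [mul_one, ← ht]; exact hub
      exact lt_of_mul_lt_mul_left this hNpos.le
    have l2 : -2 < t := by
      have : ((q : ℤ) ^ n - 1) * (-2) < ((q : ℤ) ^ n - 1) * t := by
        rw [← ht]; exact hlb
      exact lt_of_mul_lt_mul_left this hNpos.le
    have ht0 : t = 0 ∨ t = -1 := by omega
    rcases ht0 with rfl | rfl
    · have hz : (q : ℤ) ^ i + (q : ℤ) ^ b + (q : ℤ) ^ c = (q : ℤ) ^ k + q + 1 := by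
        rw [mul_zero] at ht; omega
      have heq : q ^ i + q ^ b + q ^ c = q ^ k + q + 1 := by exact_mod_cast hz
      rcases aux_key hq2 hi1 hk1 heq with ⟨e1, e2, e3⟩ | ⟨e1, e2, e3⟩ | ⟨e1, e2, e3⟩ | ⟨e1, e2, e3⟩
      · left
        refine ⟨e1, ?_, ?_⟩
        · rcases hbcase with ⟨hb1, _⟩ | ⟨hb1, _⟩ <;> omega
        · rcases hccase with ⟨hc1, _⟩ | ⟨hc1, hc2⟩ <;> omega
      · exfalso
        rcases hccase with ⟨hc1, _⟩ | ⟨hc1, hc2⟩ <;> omega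
      · exfalso
        rcases hbcase with ⟨hb1, _⟩ | ⟨hb1, _⟩ <;> omega
      · right
        refine ⟨e1, ?_, ?_⟩
        · rcases hbcase with ⟨hb1, _⟩ | ⟨hb1, hb2⟩ <;> omega
        · rcases hccase with ⟨hc1, _⟩ | ⟨hc1, hc2⟩ <;> omega
    · have hz : (q : ℤ) ^ i + (q : ℤ) ^ b + (q : ℤ) ^ c = (q : ℤ) ^ n + (q : ℤ) ^ k + q := by
        have : ((q : ℤ) ^ n - 1) * (-1) = -((q : ℤ) ^ n) + 1 := by ring
        omega
      have heq2 : q ^ i + q ^ b + q ^ c = q ^ n + q ^ k + q := by exact_mod_cast hz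
      exfalso
      rcases Nat.lt_or_ge q 3 with hq3 | hq3
      · have hq2' : q = 2 := by omega
        subst hq2'
        exact aux_key3 hn hk1 hk2 hi2 (by omega) (by omega) heq2
      · have h3Q : q ^ (n - 1) * 3 ≤ q ^ (n - 1) * q := Nat.mul_le_mul_left _ hq3
        omega
  · rintro (⟨rfl, rfl, rfl⟩ | ⟨rfl, rfl, rfl⟩)
    · have e1 : (k - 1) + 1 = k := by omega
      have e2 : (n - k) + k = n := by omega
      rw [e1, e2, pow_one]
      have h1 : q ^ n ≡ 1 [MOD q ^ n - 1] :=
        ((Nat.modEq_iff_dvd' hqn1).mpr dvd_rfl).symm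
      calc q + q ^ k + q ^ n ≡ q + q ^ k + 1 [MOD q ^ n - 1] := (Nat.ModEq.refl _).add h1
        _ = q ^ k + q + 1 := by omega
    · have e1 : (n - 1) + 1 = n := by omega
      have e2 : (n - i + 1) + i = n + 1 := by omega
      rw [e1, e2]
      have h1 : q ^ n ≡ 1 [MOD q ^ n - 1] :=
        ((Nat.modEq_iff_dvd' hqn1).mpr dvd_rfl).symm
      have h2 : q ^ (n + 1) ≡ q [MOD q ^ n - 1] := by
        calc q ^ (n + 1) = q ^ n * q := pow_succ q n
          _ ≡ 1 * q [MOD q ^ n - 1] := h1.mul_right q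
          _ = q := one_mul q
      calc q ^ i + q ^ n + q ^ (n + 1) ≡ q ^ i + 1 + q [MOD q ^ n - 1] :=
            ((Nat.ModEq.refl _).add h1).add h2
        _ = q ^ i + q + 1 := by omega
end

section
/- Let f(x) = Σ_{i=0}^{n-1} a_i x^{q^i} be a q-polynomial over F_{q^n} and let f̂(x) = Σ_{i=0}^{n-1} a_i^{q^{n-i}} x^{q^{n-i}} be its adjoint. Then for every m ∈ F_{q^n}, the F_q-subspaces {x ∈ F_{q^n} : f(x) = mx} and {x ∈ F_{q^n} : f̂(x) = mx} have the same F_q-dimension; in particular D_f = D_{f̂}, i.e., the maps x ↦ f(x)/x and x ↦ f̂(x)/x on the nonzero elements of F_{q^n} have the same image, so L_f = L_{f̂} with all point weights equal. -/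
section Aux

variable (p : ℕ) [Fact p.Prime] {F : Type} [Field F] [Fintype F] [CharP F p]
  [Algebra (ZMod p) F]

/-- The trace to the prime field is invariant under the Frobenius. -/
lemma aux_trace_frob (x : F) :
    Algebra.trace (ZMod p) F (x ^ p) = Algebra.trace (ZMod p) F x := by
  haveI : ExpChar F p := ExpChar.prime (Fact.out)
  let e : F ≃ₐ[ZMod p] F :=
    AlgEquiv.ofRingEquiv (f := frobeniusEquiv F p) (by
      intro r
      show (algebraMap (ZMod p) F r) ^ p = algebraMap (ZMod p) F r
      rw [← map_pow, ZMod.pow_card])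
  have := Algebra.trace_eq_of_algEquiv e x
  simpa [e, AlgEquiv.ofRingEquiv, frobeniusEquiv_def, frobenius_def] using this

lemma aux_trace_frob_pow (k : ℕ) (x : F) :
    Algebra.trace (ZMod p) F (x ^ p ^ k) = Algebra.trace (ZMod p) F x := by
  induction k with
  | zero => simp
  | succ k ih =>
      have : x ^ p ^ (k + 1) = (x ^ p ^ k) ^ p := by
        rw [← pow_mul, pow_succ]
      rw [this, aux_trace_frob, ih]

/-- If `ghat` is the adjoint of `g` with respect to the trace form, the kernels have the
same dimension. -/
lemma aux_finrank (g ghat : F →ₗ[ZMod p] F)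
    (hadj : ∀ x y : F,
      Algebra.trace (ZMod p) F (g x * y) = Algebra.trace (ZMod p) F (x * ghat y)) :
    Module.finrank (ZMod p) (LinearMap.ker ghat) = Module.finrank (ZMod p) (LinearMap.ker g) := by
  haveI : Module.Finite (ZMod p) F := Module.Finite.of_finite
  set B : LinearMap.BilinForm (ZMod p) F := Algebra.traceForm (ZMod p) F with hB
  have hnd : B.Nondegenerate := traceForm_nondegenerate _ _
  have hrefl : B.IsRefl := (Algebra.traceForm_isSymm (R := ZMod p) (S := F)).isRefl
  have hker : LinearMap.ker ghat = B.orthogonal (LinearMap.range g) := by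
    ext y
    rw [LinearMap.mem_ker, LinearMap.BilinForm.mem_orthogonal_iff]
    constructor
    · rintro h0 _ ⟨x, rfl⟩
      show B (g x) y = 0
      simp only [hB, Algebra.traceForm_apply, hadj, h0, mul_zero, map_zero]
    · intro h
      apply hnd.1
      intro z
      have := h (g z) ⟨z, rfl⟩
      show B (ghat y) z = 0
      have h1 : B (g z) y = 0 := this
      simp only [hB, Algebra.traceForm_apply] at h1 ⊢
      rw [mul_comm, ← hadj, h1]
  have h1 : Module.finrank (ZMod p) (LinearMap.ker ghat)
      = Module.finrank (ZMod p) F - Module.finrank (ZMod p) (LinearMap.range g) := by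
    rw [hker]
    exact LinearMap.BilinForm.finrank_orthogonal hnd _
  have h2 := LinearMap.finrank_range_add_finrank_ker g
  have h3 : Module.finrank (ZMod p) (LinearMap.range g) ≤ Module.finrank (ZMod p) F :=
    Submodule.finrank_le _
  omega

end Aux

/-- a q-polynomial `f` and its adjoint `f̂` define the same linear set of
PG(1,q^n) with all point weights equal: for every `m` the solution spaces of `f(x) = mx`
and `f̂(x) = mx` have the same size (hence the same `F_q`-dimension), and the maps
`x ↦ f(x)/x` and `x ↦ f̂(x)/x` have the same image on nonzero elements. -/
theorem stmt_19 (p e n q : ℕ) (hp : p.Prime) (he : 0 < e) (hn : 0 < n) (hq : q = p ^ e)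
    (F : Type) [Field F] [Fintype F] (hF : Fintype.card F = q ^ n)
    (a : ℕ → F) (f fhat : F → F)
    (hf : ∀ x : F, f x = ∑ i ∈ Finset.range n, a i * x ^ q ^ i)
    (hfhat : ∀ x : F, fhat x = ∑ i ∈ Finset.range n, (a i) ^ q ^ (n - i) * x ^ q ^ (n - i)) :
    (∀ m : F, Nat.card {x : F // f x = m * x} = Nat.card {x : F // fhat x = m * x}) ∧
    {y : F | ∃ x : F, x ≠ 0 ∧ f x / x = y} = {y : F | ∃ x : F, x ≠ 0 ∧ fhat x / x = y} := by
  haveI : Fact p.Prime := ⟨hp⟩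
  -- the characteristic of `F` is `p`
  haveI : CharP F (ringChar F) := ringChar.charP F
  obtain ⟨k, hrp, hcard⟩ := FiniteField.card F (ringChar F)
  have hpr : p = ringChar F := by
    have hdvd : p ∣ (ringChar F) ^ (k : ℕ) := by
      rw [← hcard, hF, hq, ← pow_mul]
      exact dvd_pow_self p (Nat.mul_pos he hn).ne'
    exact ((Nat.prime_dvd_prime_iff_eq hp hrp).mp (hp.dvd_of_dvd_pow hdvd))
  haveI hcharp : CharP F p := hpr ▸ ringChar.charP F
  haveI : ExpChar F p := ExpChar.prime hp
  letI : Algebra (ZMod p) F := ZMod.algebra F p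
  haveI : Module.Finite (ZMod p) F := Module.Finite.of_finite
  have hq1 : 1 ≤ q := by rw [hq]; exact Nat.one_le_pow _ _ hp.pos
  -- trace invariance under q-power Frobenius
  have htrq : ∀ (i : ℕ) (x : F),
      Algebra.trace (ZMod p) F (x ^ q ^ i) = Algebra.trace (ZMod p) F x := by
    intro i x
    have : x ^ q ^ i = x ^ p ^ (e * i) := by rw [hq, ← pow_mul]
    rw [this, aux_trace_frob_pow]
  -- x ^ (q ^ n) = x
  have hxqn : ∀ x : F, x ^ q ^ n = x := by
    intro x
    rw [← hF]
    exact FiniteField.pow_card x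
  -- additivity of q-power maps
  have hqadd : ∀ (i : ℕ) (x y : F), (x + y) ^ q ^ i = x ^ q ^ i + y ^ q ^ i := by
    intro i x y
    have h1 : ∀ z : F, z ^ q ^ i = z ^ p ^ (e * i) := by
      intro z; rw [hq, ← pow_mul]
    rw [h1, h1, h1, add_pow_char_pow]
  -- construct for each (h, m) the linear map x ↦ h x - m * x
  have hfadd : ∀ x y : F, f (x + y) = f x + f y := by
    intro x y
    simp only [hf, ← Finset.sum_add_distrib]
    refine Finset.sum_congr rfl fun i _ => ?_
    rw [hqadd, mul_add]
  have hfhadd : ∀ x y : F, fhat (x + y) = fhat x + fhat y := by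
    intro x y
    simp only [hfhat, ← Finset.sum_add_distrib]
    refine Finset.sum_congr rfl fun i _ => ?_
    rw [hqadd, mul_add]
  have hf0 : f 0 = 0 := by
    have := hfadd 0 0
    simpa using this.symm
  have hfh0 : fhat 0 = 0 := by
    have := hfhadd 0 0
    simpa using this.symm
  let g : F → (F →ₗ[ZMod p] F) := fun m =>
    AddMonoidHom.toZModLinearMap p
      { toFun := fun x => f x - m * x
        map_zero' := by simp [hf0]
        map_add' := fun x y => by
          show f (x + y) - m * (x + y) = (f x - m * x) + (f y - m * y)
          rw [hfadd]; ring }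
  let ghat : F → (F →ₗ[ZMod p] F) := fun m =>
    AddMonoidHom.toZModLinearMap p
      { toFun := fun x => fhat x - m * x
        map_zero' := by simp [hfh0]
        map_add' := fun x y => by
          show fhat (x + y) - m * (x + y) = (fhat x - m * x) + (fhat y - m * y)
          rw [hfhadd]; ring }
  have hgapp : ∀ m x, g m x = f x - m * x := fun _ _ => rfl
  have hghapp : ∀ m x, ghat m x = fhat x - m * x := fun _ _ => rfl
  -- the adjoint identity
  have hadjf : ∀ x y : F,
      Algebra.trace (ZMod p) F (f x * y) = Algebra.trace (ZMod p) F (x * fhat y) := by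
    intro x y
    rw [hf, hfhat, Finset.sum_mul, Finset.mul_sum, map_sum, map_sum]
    refine Finset.sum_congr rfl fun i hi => ?_
    have hi' : i < n := Finset.mem_range.mp hi
    have key : (a i * x ^ q ^ i * y) ^ q ^ (n - i)
        = x * (a i ^ q ^ (n - i) * y ^ q ^ (n - i)) := by
      rw [mul_pow, mul_pow, ← pow_mul, ← pow_add, Nat.add_sub_cancel' hi'.le, hxqn]
      ring
    rw [← htrq (n - i) (a i * x ^ q ^ i * y), key]
  have hadj : ∀ m x y : F,
      Algebra.trace (ZMod p) F (g m x * y) = Algebra.trace (ZMod p) F (x * ghat m y) := by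
    intro m x y
    rw [hgapp, hghapp, sub_mul, mul_sub, map_sub, map_sub, hadjf]
    have : m * x * y = x * (m * y) := by ring
    rw [this]
  -- equal kernel dimensions
  have hdim : ∀ m : F, Module.finrank (ZMod p) (LinearMap.ker (ghat m))
      = Module.finrank (ZMod p) (LinearMap.ker (g m)) :=
    fun m => aux_finrank p (g m) (ghat m) (hadj m)
  constructor
  · intro m
    have e1 : {x : F // f x = m * x} ≃ LinearMap.ker (g m) :=
      Equiv.subtypeEquivRight fun x => by
        rw [LinearMap.mem_ker, hgapp, sub_eq_zero]
    have e2 : {x : F // fhat x = m * x} ≃ LinearMap.ker (ghat m) :=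
      Equiv.subtypeEquivRight fun x => by
        rw [LinearMap.mem_ker, hghapp, sub_eq_zero]
    obtain ⟨e3⟩ := FiniteDimensional.nonempty_linearEquiv_of_finrank_eq (hdim m).symm
    rw [Nat.card_congr e1, Nat.card_congr e2, Nat.card_congr e3.toEquiv]
  · have hchar : ∀ (h : F → F) (gl : F →ₗ[ZMod p] F) (m : F)
        (hco' : ∀ x, gl x = h x - m * x),
        (∃ x : F, x ≠ 0 ∧ h x / x = m) ↔ LinearMap.ker gl ≠ ⊥ := by
      intro h gl m hco'
      constructor
      · rintro ⟨x, hx0, hx⟩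
        rw [div_eq_iff hx0] at hx
        refine (Submodule.ne_bot_iff _).mpr ⟨x, ?_, hx0⟩
        rw [LinearMap.mem_ker, hco', hx, sub_self]
      · intro hne
        obtain ⟨x, hxmem, hx0⟩ := (Submodule.ne_bot_iff _).mp hne
        rw [LinearMap.mem_ker, hco', sub_eq_zero] at hxmem
        exact ⟨x, hx0, by rw [div_eq_iff hx0, hxmem]⟩
    ext m
    simp only [Set.mem_setOf_eq]
    rw [hchar f (g m) m (hgapp m), hchar fhat (ghat m) m (hghapp m)]
    have hfin : ∀ gl : F →ₗ[ZMod p] F,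
        LinearMap.ker gl ≠ ⊥ ↔ Module.finrank (ZMod p) (LinearMap.ker gl) ≠ 0 := by
      intro gl
      rw [not_iff_not]
      exact Submodule.finrank_eq_zero.symm
    rw [hfin, hfin, hdim m]
end
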